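/- Let (Ω, Σ) be a measurable space and μ₁, ..., μ_k finite mutually absolutely continuous measures on Σ. Then for every ε > 0 there exists ρ ∈ Σ with μ_l(Ω \ ρ) < ε for all 1 ≤ l ≤ k, and a constant n ∈ ℕ, such that for every measurable σ ⊆ ρ and all 1 ≤ i, j ≤ k one has μᵢ(σ)/n ≤ μⱼ(σ) ≤ n·μᵢ(σ). -/

import Mathlib

open MeasureTheory Filter
open scoped ENNReal

/-- For finite mutually absolutely continuous measures `μ₁, …, μ_k` and any
`ε > 0` there are a measurable set `ρ` with `μ_l(ρᶜ) < ε` for all `l` and a constant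
`n ≥ 1` such that `μᵢ(σ)/n ≤ μⱼ(σ) ≤ n·μᵢ(σ)` for every measurable `σ ⊆ ρ` and all
`i, j`. -/
theorem stmt11 {Ω : Type*} [MeasurableSpace Ω] (k : ℕ) (μ : Fin k → Measure Ω)
    [∀ l, IsFiniteMeasure (μ l)] (hac : ∀ i j, μ i ≪ μ j)
    (ε : ENNReal) (hε : 0 < ε) :
    ∃ ρ : Set Ω, MeasurableSet ρ ∧ (∀ l, μ l ρᶜ < ε) ∧
      ∃ n : ℕ, 0 < n ∧ ∀ σ : Set Ω, MeasurableSet σ → σ ⊆ ρ →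
        ∀ i j, μ i σ / n ≤ μ j σ ∧ μ j σ ≤ n * μ i σ := by
  rcases Nat.eq_zero_or_pos k with hk | hk
  · subst hk
    exact ⟨Set.univ, MeasurableSet.univ, fun l => l.elim0,
      1, one_pos, fun σ _ _ i _ => i.elim0⟩
  set i0 : Fin k := ⟨0, hk⟩
  set ν : Measure Ω := μ i0 with hν
  set f : Fin k → Ω → ENNReal := fun i => (μ i).rnDeriv ν with hf
  have hfm : ∀ i, Measurable (f i) := fun i => Measure.measurable_rnDeriv _ _
  -- the "good" set has full ν-measure
  have hgood : ∀ᵐ x ∂ν, ∀ i, 0 < f i x ∧ f i x < ∞ := by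
    rw [ae_all_iff]
    intro i
    have h1 : ∀ᵐ x ∂ν, 0 < f i x := Measure.rnDeriv_pos' (hac i0 i)
    have h2 : ∀ᵐ x ∂ν, f i x < ∞ := Measure.rnDeriv_lt_top (μ i) ν
    filter_upwards [h1, h2] with x hx1 hx2 using ⟨hx1, hx2⟩
  set B : ℕ → Set Ω := fun n =>
    ⋂ i, f i ⁻¹' Set.Icc ((n : ENNReal) + 1)⁻¹ ((n : ENNReal) + 1) with hB
  have hBmeas : ∀ n, MeasurableSet (B n) := fun n =>
    MeasurableSet.iInter fun i => (hfm i) measurableSet_Icc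
  have hBanti : Antitone (fun n => (B n)ᶜ) := by
    intro a b hab
    apply Set.compl_subset_compl.2
    intro x hx
    simp only [hB, Set.mem_iInter, Set.mem_preimage, Set.mem_Icc] at hx ⊢
    intro i
    have hab' : (a : ENNReal) + 1 ≤ (b : ENNReal) + 1 :=
      add_le_add_left (by exact_mod_cast hab) 1
    exact ⟨le_trans (ENNReal.inv_le_inv' hab') (hx i).1, le_trans (hx i).2 hab'⟩
  have hInull : ∀ l, μ l (⋂ n, (B n)ᶜ) = 0 := by
    intro l
    have hsub : ∀ᵐ x ∂ν, x ∉ ⋂ n, (B n)ᶜ := by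
      filter_upwards [hgood] with x hx
      simp only [Set.mem_iInter, Set.mem_compl_iff, not_forall]
      -- find n such that x ∈ B n
      have h1 : ∀ i, ∃ n : ℕ, ((n : ENNReal) + 1)⁻¹ ≤ f i x ∧ f i x ≤ (n : ENNReal) + 1 := by
        intro i
        obtain ⟨n1, hn1⟩ := ENNReal.exists_nat_gt (hx i).2.ne
        obtain ⟨n2, hn2⟩ := ENNReal.exists_inv_nat_lt (hx i).1.ne'
        refine ⟨max n1 n2, ?_, ?_⟩
        · refine le_trans (le_trans ?_ hn2.le) (by rfl)
          refine ENNReal.inv_le_inv' ?_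
          have h2 : (n2 : ENNReal) ≤ (max n1 n2 : ℕ) := by exact_mod_cast le_max_right n1 n2
          exact le_trans h2 le_self_add
        · refine le_trans hn1.le ?_
          have : (n1 : ENNReal) ≤ (max n1 n2 : ℕ) := by exact_mod_cast le_max_left n1 n2
          exact le_trans this le_self_add
      choose g hg using h1
      refine ⟨Finset.univ.sup g, not_not.2 ?_⟩
      simp only [hB, Set.mem_iInter, Set.mem_preimage, Set.mem_Icc]
      intro i
      have hgi : (g i : ENNReal) ≤ (Finset.univ.sup g : ℕ) := by
        exact_mod_cast Finset.le_sup (Finset.mem_univ i)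
      refine ⟨le_trans (ENNReal.inv_le_inv' (by gcongr)) (hg i).1,
        le_trans (hg i).2 (by gcongr)⟩
    have hν0 : ν (⋂ n, (B n)ᶜ) = 0 := by
      rw [show (⋂ n, (B n)ᶜ) = {a | ∀ n, a ∉ B n} by ext; simp]
      have := ae_iff.mp hsub
      simpa using this
    exact hac l i0 hν0
  have htend : ∀ l, Tendsto (fun n => μ l ((B n)ᶜ)) atTop (nhds 0) := by
    intro l
    have := tendsto_measure_iInter_atTop (μ := μ l) (s := fun n => (B n)ᶜ)
      (fun n => (hBmeas n).compl.nullMeasurableSet) hBanti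
      ⟨0, measure_ne_top _ _⟩
    rwa [hInull l] at this
  have hev : ∀ᶠ n in atTop, ∀ l, μ l ((B n)ᶜ) < ε :=
    eventually_all.2 fun l => (htend l).eventually_lt_const hε
  obtain ⟨N, hN⟩ := hev.exists
  refine ⟨B N, hBmeas N, hN, (N + 1) ^ 2, by positivity, ?_⟩
  -- main estimate
  have hC : ((N : ENNReal) + 1) ≠ 0 := by
    exact_mod_cast (Nat.succ_ne_zero N)
  have hC' : ((N : ENNReal) + 1) ≠ ∞ := by finiteness
  have key : ∀ (σ : Set Ω), MeasurableSet σ → σ ⊆ B N → ∀ i,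
      ((N : ENNReal) + 1)⁻¹ * ν σ ≤ μ i σ ∧ μ i σ ≤ ((N : ENNReal) + 1) * ν σ := by
    intro σ hσ hσB i
    have hrn : ∫⁻ x in σ, f i x ∂ν = μ i σ :=
      Measure.setLIntegral_rnDeriv (hac i i0) σ
    have hub : ∀ x ∈ σ, f i x ≤ (N : ENNReal) + 1 := fun x hx =>
      (Set.mem_preimage.1 (Set.mem_iInter.1 (hσB hx) i)).2
    have hlb : ∀ x ∈ σ, ((N : ENNReal) + 1)⁻¹ ≤ f i x := fun x hx =>
      (Set.mem_preimage.1 (Set.mem_iInter.1 (hσB hx) i)).1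
    constructor
    · calc ((N : ENNReal) + 1)⁻¹ * ν σ
          = ∫⁻ _ in σ, ((N : ENNReal) + 1)⁻¹ ∂ν := by
            rw [setLIntegral_const, mul_comm]
        _ ≤ ∫⁻ x in σ, f i x ∂ν :=
            setLIntegral_mono (hfm i) hlb
        _ = μ i σ := hrn
    · calc μ i σ = ∫⁻ x in σ, f i x ∂ν := hrn.symm
        _ ≤ ∫⁻ _ in σ, ((N : ENNReal) + 1) ∂ν :=
            setLIntegral_mono measurable_const hub
        _ = ((N : ENNReal) + 1) * ν σ := by rw [setLIntegral_const, mul_comm]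
  intro σ hσ hσB i j
  have hnc : ((((N + 1) ^ 2 : ℕ) : ENNReal)) = ((N : ENNReal) + 1) ^ 2 := by push_cast; ring
  have hij : ∀ a b : Fin k, μ a σ ≤ ((N : ENNReal) + 1) ^ 2 * μ b σ := by
    intro a b
    have h1 := (key σ hσ hσB a).2
    have h2 := (key σ hσ hσB b).1
    have hνle : ν σ ≤ ((N : ENNReal) + 1) * μ b σ := by
      calc ν σ = ((N : ENNReal) + 1) * (((N : ENNReal) + 1)⁻¹ * ν σ) := by
            rw [← mul_assoc, ENNReal.mul_inv_cancel hC hC', one_mul]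
        _ ≤ ((N : ENNReal) + 1) * μ b σ := by gcongr
    calc μ a σ ≤ ((N : ENNReal) + 1) * ν σ := h1
      _ ≤ ((N : ENNReal) + 1) * (((N : ENNReal) + 1) * μ b σ) := by gcongr
      _ = ((N : ENNReal) + 1) ^ 2 * μ b σ := by ring
  constructor
  · rw [hnc]
    exact ENNReal.div_le_of_le_mul' (hij i j)
  · rw [hnc]
    exact hij j i
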